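/- Let q, k be real with 0 < q < 1 and 0 < k < 1, set t := q^k, and for n ∈ ℕ let P_n(z_1, z_2) := Σ_{m=0}^n [∏_{l=0}^{m−1} (1−q^{k+l})(1−q^{−n+l}) / ((1−q^{1+l})(1−q^{1−n−k+l}))] · q^{(1−k)m} · z_1^m z_2^{n−m}. Then P_n is an eigenfunction of the rank-one Macdonald operator: for all z_1, z_2 ∈ ℂ with z_1 ≠ z_2, t·[ ((t z_1 − z_2)/(z_1 − z_2))·P_n(q z_1, z_2) + ((t z_2 − z_1)/(z_2 − z_1))·P_n(z_1, q z_2) ] = t·(1 + t q^n)·P_n(z_1, z_2). -/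

import Mathlib

/-- `q^x := exp(x·log q)` for real `q > 0` and complex `x`. -/
noncomputable def qpow (q : ℝ) (x : ℂ) : ℂ := Complex.exp (x * Real.log q)

/-- The terminating q-hypergeometric (Macdonald) polynomial of degree `n` in two
variables: `P_n(z₁,z₂) = z₂^n F_q(k, -n, -n-k+1, q^{1-k} z₁/z₂)` written out. -/
noncomputable def macP (q k : ℝ) (n : ℕ) (z1 z2 : ℂ) : ℂ :=
  ∑ m ∈ Finset.range (n + 1),
    (∏ l ∈ Finset.range m,
      ((1 - qpow q ((k : ℂ) + l)) * (1 - qpow q ((l : ℂ) - n)) /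
        ((1 - qpow q (1 + l)) * (1 - qpow q (1 - (n : ℂ) - k + l))))) *
      qpow q ((1 - (k : ℂ)) * m) * z1 ^ m * z2 ^ (n - m)

lemma qpow_add (q : ℝ) (x y : ℂ) : qpow q (x + y) = qpow q x * qpow q y := by
  simp [qpow, add_mul, Complex.exp_add]

lemma qpow_neg (q : ℝ) (x : ℂ) : qpow q (-x) = (qpow q x)⁻¹ := by
  simp [qpow, neg_mul, Complex.exp_neg]

lemma qpow_ne_zero (q : ℝ) (x : ℂ) : qpow q x ≠ 0 := Complex.exp_ne_zero _

lemma qpow_one {q : ℝ} (hq : 0 < q) : qpow q 1 = (q : ℂ) := by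
  rw [qpow, one_mul, ← Complex.ofReal_exp, Real.exp_log hq]

lemma qpow_natCast {q : ℝ} (hq : 0 < q) (m : ℕ) : qpow q (m : ℂ) = (q : ℂ) ^ m := by
  rw [qpow, Complex.exp_nat_mul, ← Complex.ofReal_exp, Real.exp_log hq]

lemma qpow_real_ne_one {q : ℝ} (hq0 : 0 < q) (hq1 : q ≠ 1) {r : ℝ} (hr : r ≠ 0) :
    qpow q (r : ℂ) ≠ 1 := by
  rw [qpow, ← Complex.ofReal_mul, ← Complex.ofReal_exp]
  rw [ne_eq, ← Complex.ofReal_one, Complex.ofReal_inj, Real.exp_eq_one_iff]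
  exact mul_ne_zero hr (Real.log_ne_zero_of_pos_of_ne_one hq0 hq1)

/-- The scalar rational-function identity at the heart of the coefficient recurrence. -/
lemma scalar (Q T u w : ℂ) (hQ : Q ≠ 0) (hT : T ≠ 0) (hu : u ≠ 0) (hw : w ≠ 0)
    (hA : 1 - Q * u ≠ 0) (hB : 1 - (T * w)⁻¹ ≠ 0) :
    T * u + Q * w - (1 + T * (u * Q * w)) =
      (1 - T * u) * (1 - (Q * w)⁻¹) / ((1 - Q * u) * (1 - (T * w)⁻¹)) * (Q * T⁻¹) *
        (u * Q + T * w - (1 + T * (u * Q * w))) := by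
  rw [div_mul_eq_mul_div, div_mul_eq_mul_div, eq_comm, div_eq_iff (mul_ne_zero hA hB)]
  have h1 : (Q * w)⁻¹ = Q⁻¹ * w⁻¹ := by rw [mul_inv]
  have h2 : (T * w)⁻¹ = T⁻¹ * w⁻¹ := by rw [mul_inv]
  rw [h1, h2]
  field_simp
  ring

/-- The coefficient of `z1^m z2^(n-m)` in `macP`. -/
noncomputable def cc (q k : ℝ) (n m : ℕ) : ℂ :=
  (∏ l ∈ Finset.range m,
      ((1 - qpow q ((k : ℂ) + l)) * (1 - qpow q ((l : ℂ) - n)) /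
        ((1 - qpow q (1 + l)) * (1 - qpow q (1 - (n : ℂ) - k + l))))) *
    qpow q ((1 - (k : ℂ)) * m)

/-- The key coefficient recurrence making the telescoping work. -/
lemma key {q k : ℝ} (hq0 : 0 < q) (hq1 : q < 1) (hk0 : 0 < k) (hk1 : k < 1)
    (n m : ℕ) (hm : m < n) :
    cc q k n m * (qpow q k * (q : ℂ) ^ m + (q : ℂ) ^ (n - m) - (1 + qpow q k * (q : ℂ) ^ n)) =
      cc q k n (m + 1) *
        ((q : ℂ) ^ (m + 1) + qpow q k * (q : ℂ) ^ (n - (m + 1)) - (1 + qpow q k * (q : ℂ) ^ n)) := by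
  obtain ⟨j, rfl⟩ : ∃ j, n = m + 1 + j := ⟨n - (m + 1), by omega⟩
  have hQ0 : (q : ℂ) ≠ 0 := Complex.ofReal_ne_zero.mpr hq0.ne'
  have hT0 : qpow q (k : ℂ) ≠ 0 := qpow_ne_zero _ _
  have e1 : qpow q ((k : ℂ) + m) = qpow q (k : ℂ) * (q : ℂ) ^ m := by
    rw [qpow_add, qpow_natCast hq0]
  have e2 : qpow q ((m : ℂ) - (m + 1 + j : ℕ)) = ((q : ℂ) * (q : ℂ) ^ j)⁻¹ := by
    have h : ((m : ℂ) - ((m + 1 + j : ℕ) : ℂ)) = -((1 : ℂ) + (j : ℕ)) := by push_cast; ring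
    rw [h, qpow_neg, qpow_add, qpow_one hq0, qpow_natCast hq0]
  have e3 : qpow q (1 + (m : ℂ)) = (q : ℂ) * (q : ℂ) ^ m := by
    rw [qpow_add, qpow_one hq0, qpow_natCast hq0]
  have e4 : qpow q (1 - ((m + 1 + j : ℕ) : ℂ) - k + m) = (qpow q (k : ℂ) * (q : ℂ) ^ j)⁻¹ := by
    have h : (1 - ((m + 1 + j : ℕ) : ℂ) - (k : ℂ) + m) = -((k : ℂ) + (j : ℕ)) := by
      push_cast; ring
    rw [h, qpow_neg, qpow_add, qpow_natCast hq0]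
  have e5 : qpow q ((1 - (k : ℂ)) * ((m + 1 : ℕ) : ℂ)) =
      qpow q ((1 - (k : ℂ)) * m) * ((q : ℂ) * (qpow q (k : ℂ))⁻¹) := by
    have h : (1 - (k : ℂ)) * ((m + 1 : ℕ) : ℂ) =
        (1 - (k : ℂ)) * m + (1 + -(k : ℂ)) := by push_cast; ring
    rw [h, qpow_add, qpow_add, qpow_one hq0, qpow_neg]
  have hA : (1 : ℂ) - (q : ℂ) * (q : ℂ) ^ m ≠ 0 := by
    rw [← e3, sub_ne_zero]
    have h : (1 + (m : ℂ)) = (((1 + m : ℝ)) : ℂ) := by push_cast; ring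
    rw [h]
    exact (qpow_real_ne_one hq0 hq1.ne (by positivity)).symm
  have hB : (1 : ℂ) - (qpow q (k : ℂ) * (q : ℂ) ^ j)⁻¹ ≠ 0 := by
    rw [← e4, sub_ne_zero]
    have h : (1 - ((m + 1 + j : ℕ) : ℂ) - (k : ℂ) + m) = (((-(k + j) : ℝ)) : ℂ) := by
      push_cast; ring
    rw [h]
    refine (qpow_real_ne_one hq0 hq1.ne ?_).symm
    have : (0 : ℝ) < k + j := by positivity
    linarith
  have p1 : (q : ℂ) ^ (m + 1 + j - m) = (q : ℂ) * (q : ℂ) ^ j := by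
    have h : m + 1 + j - m = j + 1 := by omega
    rw [h]; ring
  have p2 : (q : ℂ) ^ (m + 1 + j - (m + 1)) = (q : ℂ) ^ j := by
    have h : m + 1 + j - (m + 1) = j := by omega
    rw [h]
  have p3 : (q : ℂ) ^ (m + 1 + j) = (q : ℂ) ^ m * (q : ℂ) * (q : ℂ) ^ j := by
    rw [pow_add, pow_add]; ring
  have p4 : (q : ℂ) ^ (m + 1) = (q : ℂ) ^ m * (q : ℂ) := by rw [pow_succ]
  simp only [cc, Finset.prod_range_succ, e1, e2, e3, e4, e5, p1, p2, p3, p4]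
  rw [scalar (q : ℂ) (qpow q (k : ℂ)) ((q : ℂ) ^ m) ((q : ℂ) ^ j) hQ0 hT0
    (pow_ne_zero _ hQ0) (pow_ne_zero _ hQ0) hA hB]
  ring

lemma macP_mul_left (q k : ℝ) (n : ℕ) (z1 z2 : ℂ) :
    macP q k n ((q : ℂ) * z1) z2 =
      ∑ m ∈ Finset.range (n + 1), cc q k n m * (q : ℂ) ^ m * z1 ^ m * z2 ^ (n - m) := by
  simp only [macP, cc, mul_pow]
  exact Finset.sum_congr rfl fun m _ => by ring

lemma macP_mul_right (q k : ℝ) (n : ℕ) (z1 z2 : ℂ) :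
    macP q k n z1 ((q : ℂ) * z2) =
      ∑ m ∈ Finset.range (n + 1), cc q k n m * (q : ℂ) ^ (n - m) * z1 ^ m * z2 ^ (n - m) := by
  simp only [macP, cc, mul_pow]
  exact Finset.sum_congr rfl fun m _ => by ring

lemma macP_plain (q k : ℝ) (n : ℕ) (z1 z2 : ℂ) :
    macP q k n z1 z2 =
      ∑ m ∈ Finset.range (n + 1), cc q k n m * z1 ^ m * z2 ^ (n - m) := rfl

/-- The telescoped eigenfunction identity, multiplied through by `z1 - z2`. -/
lemma sums {q k : ℝ} (hq0 : 0 < q) (hq1 : q < 1) (hk0 : 0 < k) (hk1 : k < 1)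
    (n : ℕ) (z1 z2 : ℂ) :
    (qpow q k * z1 - z2) * macP q k n ((q : ℂ) * z1) z2 +
        (z1 - qpow q k * z2) * macP q k n z1 ((q : ℂ) * z2) =
      (1 + qpow q k * (q : ℂ) ^ n) * (z1 - z2) * macP q k n z1 z2 := by
  set T := qpow q k with hT
  rw [macP_mul_left, macP_mul_right, macP_plain, Finset.mul_sum, Finset.mul_sum,
    Finset.mul_sum, ← sub_eq_zero, ← Finset.sum_add_distrib, ← Finset.sum_sub_distrib]
  have step : ∀ m ∈ Finset.range (n + 1),
      ((T * z1 - z2) * (cc q k n m * (q : ℂ) ^ m * z1 ^ m * z2 ^ (n - m)) +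
        (z1 - T * z2) * (cc q k n m * (q : ℂ) ^ (n - m) * z1 ^ m * z2 ^ (n - m))) -
        (1 + T * (q : ℂ) ^ n) * (z1 - z2) * (cc q k n m * z1 ^ m * z2 ^ (n - m)) =
      cc q k n m * (T * (q : ℂ) ^ m + (q : ℂ) ^ (n - m) - (1 + T * (q : ℂ) ^ n)) *
          (z1 ^ (m + 1) * z2 ^ (n - m)) -
        cc q k n m * ((q : ℂ) ^ m + T * (q : ℂ) ^ (n - m) - (1 + T * (q : ℂ) ^ n)) *
          (z1 ^ m * z2 ^ (n - m + 1)) := by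
    intro m _
    rw [pow_succ z1, pow_succ z2]
    ring
  rw [Finset.sum_congr rfl step, Finset.sum_sub_distrib, sub_eq_zero]
  have hEn : cc q k n n * (T * (q : ℂ) ^ n + (q : ℂ) ^ (n - n) - (1 + T * (q : ℂ) ^ n)) *
      (z1 ^ (n + 1) * z2 ^ (n - n)) = 0 := by
    simp only [Nat.sub_self, pow_zero]; ring
  have hF0 : cc q k n 0 * ((q : ℂ) ^ 0 + T * (q : ℂ) ^ (n - 0) - (1 + T * (q : ℂ) ^ n)) *
      (z1 ^ 0 * z2 ^ (n - 0 + 1)) = 0 := by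
    simp only [Nat.sub_zero, pow_zero]; ring
  rw [Finset.sum_range_succ, hEn, add_zero, Finset.sum_range_succ' _ n, hF0, add_zero]
  refine Finset.sum_congr rfl fun i hi => ?_
  have hi' : i < n := Finset.mem_range.mp hi
  have h1 : n - (i + 1) + 1 = n - i := by omega
  rw [← key hq0 hq1 hk0 hk1 n i hi', h1]

lemma t_eq {q : ℝ} (k : ℝ) (hq : 0 < q) : ((q ^ k : ℝ) : ℂ) = qpow q (k : ℂ) := by
  rw [Real.rpow_def_of_pos hq, qpow, ← Complex.ofReal_mul, ← Complex.ofReal_exp, mul_comm]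

/-- `P_n` is an eigenfunction of the rank-one Macdonald operator with eigenvalue
`t(1 + t qⁿ)`. -/
theorem stmt5 (q k t : ℝ) (hq0 : 0 < q) (hq1 : q < 1) (hk0 : 0 < k) (hk1 : k < 1)
    (ht : t = q ^ k) (n : ℕ) (z1 z2 : ℂ) (hz : z1 ≠ z2) :
    (t : ℂ) * (((t : ℂ) * z1 - z2) / (z1 - z2) * macP q k n ((q : ℂ) * z1) z2 +
        ((t : ℂ) * z2 - z1) / (z2 - z1) * macP q k n z1 ((q : ℂ) * z2)) =
      (t : ℂ) * (1 + (t : ℂ) * (q : ℂ) ^ n) * macP q k n z1 z2 := by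
  subst ht
  rw [t_eq k hq0]
  set T := qpow q (k : ℂ) with hT
  have hz' : z1 - z2 ≠ 0 := sub_ne_zero.mpr hz
  have e : (T * z2 - z1) / (z2 - z1) = (z1 - T * z2) / (z1 - z2) := by
    rw [show T * z2 - z1 = -(z1 - T * z2) by ring, show z2 - z1 = -(z1 - z2) by ring,
      neg_div_neg_eq]
  rw [e, div_mul_eq_mul_div, div_mul_eq_mul_div, ← add_div,
    sums hq0 hq1 hk0 hk1 n z1 z2]
  field_simp
  ring
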